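/- arXiv:0807.2849 — 2 statements merged into one kernel-verified Lean document; each statement's English description precedes it below -/
import Mathlib

section
/- Let q be an odd prime power and F_q the finite field with q elements, and for x ∈ F_q² write ‖x‖ = x₁² + x₂². There exist constants C > 0 and c > 0 such that the following holds: if E ⊆ F_q² and ρ is a real number with C/√q ≤ ρ ≤ 1 and |E| ≥ ρq², then the number of triples (a,b,c) ∈ F_q³ for which there exists (x,y,z) ∈ E × E × E with ‖x−y‖ = a, ‖x−z‖ = b and ‖y−z‖ = c is at least cρq³. -/
/-- The norm `‖x‖ = x₁² + x₂²` on `F_q²`. -/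
def fnorm {F : Type*} [Field F] (x : Fin 2 → F) : F := x 0 ^ 2 + x 1 ^ 2

namespace Stmt1Aux

variable {F : Type} [Field F]

lemma fnorm_sub (x y : Fin 2 → F) :
    fnorm (x - y) = (x 0 - y 0)^2 + (x 1 - y 1)^2 := rfl

lemma ortho_exists {w0 w1 u0 u1 : F} (hw : ¬ (w0 = 0 ∧ w1 = 0))
    (h : u0 * w0 + u1 * w1 = 0) : ∃ t, u0 = -(t * w1) ∧ u1 = t * w0 := by
  by_cases h0 : w0 = 0
  · have h1 : w1 ≠ 0 := fun h1 => hw ⟨h0, h1⟩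
    subst h0
    have hu1 : u1 = 0 := by
      have h' : u1 * w1 = 0 := by linear_combination h
      exact (mul_eq_zero.1 h').resolve_right h1
    exact ⟨-u0 / w1, by field_simp, by simp [hu1]⟩
  · refine ⟨u1 / w0, ?_, by field_simp⟩
    field_simp
    linear_combination h

/-- Three points equidistant (in two ways) from a pair at non-isotropic distance
can't be pairwise distinct. -/
lemma fiber_two (h2 : (2:F) ≠ 0) {x y z1 z2 z3 : Fin 2 → F} {b c : F}
    (ha : fnorm (x - y) ≠ 0)
    (hb1 : fnorm (x - z1) = b) (hc1 : fnorm (y - z1) = c)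
    (hb2 : fnorm (x - z2) = b) (hc2 : fnorm (y - z2) = c)
    (hb3 : fnorm (x - z3) = b) (hc3 : fnorm (y - z3) = c) :
    z1 = z2 ∨ z1 = z3 ∨ z2 = z3 := by
  rw [fnorm_sub] at ha hb1 hc1 hb2 hc2 hb3 hc3
  set w0 := y 0 - x 0 with hw0
  set w1 := y 1 - x 1 with hw1
  have hw : ¬ (w0 = 0 ∧ w1 = 0) := by
    rintro ⟨e0, e1⟩
    apply ha
    have : x 0 - y 0 = 0 := by rw [hw0] at e0; linear_combination -e0
    have h1' : x 1 - y 1 = 0 := by rw [hw1] at e1; linear_combination -e1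
    rw [this, h1']; ring
  -- orthogonality for z2 - z1
  have o2 : (z2 0 - z1 0) * w0 + (z2 1 - z1 1) * w1 = 0 := by
    have e : 2 * ((z2 0 - z1 0) * w0 + (z2 1 - z1 1) * w1) = 0 := by
      rw [hw0, hw1]; linear_combination hb2 - hc2 - hb1 + hc1
    rcases mul_eq_zero.1 e with h' | h'
    · exact absurd h' h2
    · exact h'
  have o3 : (z3 0 - z1 0) * w0 + (z3 1 - z1 1) * w1 = 0 := by
    have e : 2 * ((z3 0 - z1 0) * w0 + (z3 1 - z1 1) * w1) = 0 := by
      rw [hw0, hw1]; linear_combination hb3 - hc3 - hb1 + hc1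
    rcases mul_eq_zero.1 e with h' | h'
    · exact absurd h' h2
    · exact h'
  obtain ⟨t2, ht2a, ht2b⟩ := ortho_exists hw o2
  obtain ⟨t3, ht3a, ht3b⟩ := ortho_exists hw o3
  have hz20 : z2 0 = z1 0 - t2 * w1 := by linear_combination ht2a
  have hz21 : z2 1 = z1 1 + t2 * w0 := by linear_combination ht2b
  have hz30 : z3 0 = z1 0 - t3 * w1 := by linear_combination ht3a
  have hz31 : z3 1 = z1 1 + t3 * w0 := by linear_combination ht3b
  have hD : w0^2 + w1^2 ≠ 0 := by
    intro h
    apply ha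
    rw [hw0, hw1] at h
    linear_combination h
  -- circle conditions
  have e2 : t2 * (2 * (-(w1 * (x 0 - z1 0)) + w0 * (x 1 - z1 1)) - t2 * (w0^2 + w1^2)) = 0 := by
    rw [hz20, hz21] at hb2
    linear_combination hb1 - hb2
  have e3 : t3 * (2 * (-(w1 * (x 0 - z1 0)) + w0 * (x 1 - z1 1)) - t3 * (w0^2 + w1^2)) = 0 := by
    rw [hz30, hz31] at hb3
    linear_combination hb1 - hb3
  by_cases ht2 : t2 = 0
  · left
    subst ht2
    have h0 : z1 0 = z2 0 := by rw [hz20]; ring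
    have h1 : z1 1 = z2 1 := by rw [hz21]; ring
    exact funext (Fin.forall_fin_two.mpr ⟨h0, h1⟩)
  by_cases ht3 : t3 = 0
  · right; left
    subst ht3
    have h0 : z1 0 = z3 0 := by rw [hz30]; ring
    have h1 : z1 1 = z3 1 := by rw [hz31]; ring
    exact funext (Fin.forall_fin_two.mpr ⟨h0, h1⟩)
  right; right
  have f2 := (mul_eq_zero.1 e2).resolve_left ht2
  have f3 := (mul_eq_zero.1 e3).resolve_left ht3
  have : (t2 - t3) * (w0^2 + w1^2) = 0 := by linear_combination f3 - f2
  have ht : t2 = t3 := by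
    rcases mul_eq_zero.1 this with h' | h'
    · linear_combination h'
    · exact absurd h' hD
  have h0 : z2 0 = z3 0 := by rw [hz20, hz30, ht]
  have h1 : z2 1 = z3 1 := by rw [hz21, hz31, ht]
  exact funext (Fin.forall_fin_two.mpr ⟨h0, h1⟩)


set_option linter.unusedSectionVars false
variable {F : Type} [Field F] [Fintype F] [DecidableEq F]

lemma two_ne_zero_of_odd_card (hodd : Odd (Fintype.card F)) : (2 : F) ≠ 0 := by
  intro h
  have hchar : ringChar F ∣ 2 := by
    have : ((2 : ℕ) : F) = 0 := by exact_mod_cast h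
    exact (CharP.cast_eq_zero_iff F (ringChar F) 2).mp this
  have hprime : (ringChar F).Prime := CharP.char_is_prime F (ringChar F)
  have h2 : ringChar F = 2 := (Nat.prime_dvd_prime_iff_eq hprime Nat.prime_two).mp hchar
  have := FiniteField.even_card_of_char_two h2
  rcases hodd with ⟨k, hk⟩
  omega

lemma sum_linear_eq_zero {ψ : AddChar F ℂ} (hψ : ψ.IsPrimitive) {m : Fin 2 → F}
    (hm : m ≠ 0) : ∑ x : Fin 2 → F, ψ (x 0 * m 0 + x 1 * m 1) = 0 := by
  have hre : ∑ x : Fin 2 → F, ψ (x 0 * m 0 + x 1 * m 1)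
      = ∑ p : F × F, ψ (p.1 * m 0 + p.2 * m 1) :=
    Fintype.sum_equiv (piFinTwoEquiv (fun _ : Fin 2 => F))
      _ _ (fun x => rfl)
  rw [hre, Fintype.sum_prod_type]
  simp_rw [AddChar.map_add_eq_mul]
  rw [← Finset.sum_mul_sum]
  rcases (by
    by_contra hc
    push_neg at hc
    exact hm (funext (Fin.forall_fin_two.mpr ⟨hc.1, hc.2⟩)) : m 0 ≠ 0 ∨ m 1 ≠ 0) with h0 | h1
  · rw [AddChar.sum_mulShift (m 0) hψ, if_neg h0]; simp
  · rw [AddChar.sum_mulShift (m 1) hψ, if_neg h1]; simp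

end Stmt1Aux

namespace Stmt1Aux2

open Stmt1Aux

variable {F : Type} [Field F] [Fintype F] [DecidableEq F]

/-- distance of a pair -/
def fd {F : Type} [Field F] (p : (Fin 2 → F) × (Fin 2 → F)) : F := fnorm (p.1 - p.2)

set_option linter.unusedSectionVars false

set_option maxHeartbeats 1000000 in
lemma energy_bound (hodd : Odd (Fintype.card F)) (EF : Finset (Fin 2 → F)) :
    (Fintype.card F : ℝ) *
        ∑ a : F, (((EF ×ˢ EF).filter (fun p => fd p = a)).card : ℝ)^2
      ≤ (EF.card : ℝ)^4 + (Fintype.card F : ℝ)^3 * (EF.card : ℝ)^2 := by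
  obtain ⟨ψ, hψ⟩ : ∃ ψ : AddChar F ℂ, ψ.IsPrimitive :=
    ⟨_, AddChar.FiniteField.primitiveChar_to_Complex_isPrimitive F⟩
  have hR : 0 < ringChar F :=
    Nat.pos_of_ne_zero (CharP.ringChar_ne_zero_of_finite F)
  have hconj : ∀ t : F, (starRingEnd ℂ) (ψ t) = ψ (-t) := by
    intro t
    rw [AddChar.starComp_apply hR, AddChar.inv_apply]
  set P : Finset ((Fin 2 → F) × (Fin 2 → F)) := EF ×ˢ EF with hP
  set T : F → ℂ := fun s => ∑ p ∈ P, ψ (s * fd p) with hT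
  have hTconj : ∀ s, (starRingEnd ℂ) (T s) = T (-s) := by
    intro s
    rw [hT, map_sum]
    exact Finset.sum_congr rfl fun p _ => by rw [hconj, neg_mul]
  -- step 1: expand T s * conj (T s)
  have l1 : ∀ s : F, T s * (starRingEnd ℂ) (T s)
      = ∑ p ∈ P, ∑ p' ∈ P, ψ (s * (fd p' - fd p)) := by
    intro s
    rw [hTconj s, mul_comm, hT]
    rw [Finset.sum_mul_sum]
    refine Finset.sum_congr rfl fun p _ => Finset.sum_congr rfl fun p' _ => ?_
    rw [← AddChar.map_add_eq_mul]
    exact congrArg ψ (by ring)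
  -- step 2: sum over s
  have key2 : ∑ s : F, T s * (starRingEnd ℂ) (T s)
      = (Fintype.card F : ℂ) * ∑ p ∈ P, ((P.filter (fun p' => fd p' = fd p)).card : ℂ) := by
    simp_rw [l1]
    rw [Finset.sum_comm, Finset.mul_sum]
    refine Finset.sum_congr rfl fun p _ => ?_
    rw [Finset.sum_comm]
    have e : ∀ p' ∈ P, ∑ s : F, ψ (s * (fd p' - fd p))
        = if fd p' = fd p then (Fintype.card F : ℂ) else 0 := by
      intro p' _
      rw [AddChar.sum_mulShift _ hψ]
      simp [sub_eq_zero]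
    rw [Finset.sum_congr rfl e, ← Finset.sum_filter, Finset.sum_const, nsmul_eq_mul, mul_comm]
  -- step 3: fiberwise
  have key3 : ∑ p ∈ P, ((P.filter (fun p' => fd p' = fd p)).card : ℂ)
      = ∑ a : F, (((P.filter (fun p' => fd p' = a)).card : ℂ))^2 := by
    rw [← Finset.sum_fiberwise_of_maps_to (fun p _ => Finset.mem_univ (fd p))
          (fun p => ((P.filter (fun p' => fd p' = fd p)).card : ℂ))]
    refine Finset.sum_congr rfl fun a _ => ?_
    rw [Finset.sum_congr rfl (fun p hp => by rw [(Finset.mem_filter.1 hp).2]),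
      Finset.sum_const, nsmul_eq_mul, sq]
  -- real form
  have keyR : (Fintype.card F : ℝ) *
      ∑ a : F, (((P.filter (fun p => fd p = a)).card : ℝ))^2
      = ∑ s : F, Complex.normSq (T s) := by
    have hC : ∑ s : F, ((Complex.normSq (T s) : ℝ) : ℂ)
        = (Fintype.card F : ℂ) * ∑ a : F, (((P.filter (fun p' => fd p' = a)).card : ℂ))^2 := by
      rw [← key3, ← key2]
      exact Finset.sum_congr rfl fun s _ => (Complex.mul_conj (T s)).symm
    have := hC
    push_cast at this
    exact_mod_cast this.symm
  -- value at 0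
  have hT0 : Complex.normSq (T 0) = (EF.card : ℝ)^4 := by
    have : T 0 = ((EF.card ^ 2 : ℕ) : ℂ) := by
      rw [hT]
      simp only [zero_mul, AddChar.map_zero_eq_one, Finset.sum_const, nsmul_eq_mul, mul_one]
      rw [hP, Finset.card_product]
      push_cast
      ring
    rw [this]
    rw [Complex.normSq_natCast]
    push_cast
    ring
  -- bound for s ≠ 0
  have hs_bound : ∀ s : F, s ≠ 0 →
      Complex.normSq (T s) ≤ (EF.card : ℝ)^2 * (Fintype.card F : ℝ)^2 := by
    intro s hs
    set h : (Fin 2 → F) → ℂ := fun x => ∑ y ∈ EF, ψ (s * fnorm (x - y)) with hh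
    have hTs : T s = ∑ x ∈ EF, h x := by
      simp only [hT, hP]
      rw [Finset.sum_product]
      simp only [hh, fd]
    have hfull : ∑ x : Fin 2 → F, Complex.normSq (h x)
        = (EF.card : ℝ) * (Fintype.card F : ℝ)^2 := by
      have e2 : ∀ y y' : Fin 2 → F, y ∈ EF → y' ∈ EF →
          ∑ x : Fin 2 → F, ψ (s * fnorm (x - y') - s * fnorm (x - y))
          = if y = y' then ((Fintype.card F : ℂ))^2 else 0 := by
        intro y y' _ _
        by_cases hyy : y = y'
        · subst hyy
          rw [if_pos rfl]
          simp only [sub_self, AddChar.map_zero_eq_one, Finset.sum_const, nsmul_eq_mul, mul_one]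
          rw [Finset.card_univ, Fintype.card_fun, Fintype.card_fin]
          push_cast
          ring
        · rw [if_neg hyy]
          set m : Fin 2 → F := fun i => 2 * s * (y i - y' i) with hm
          have hmne : m ≠ 0 := by
            intro h0
            apply hyy
            funext i
            have hmi : m i = 0 := by rw [h0]; rfl
            rw [hm] at hmi
            have h2s : 2 * s ≠ 0 :=
              mul_ne_zero (two_ne_zero_of_odd_card hodd) hs
            have := (mul_eq_zero.1 hmi).resolve_left h2s
            exact sub_eq_zero.1 this
          have split : ∀ x : Fin 2 → F, ψ (s * fnorm (x - y') - s * fnorm (x - y))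
              = ψ (x 0 * m 0 + x 1 * m 1) * ψ (s * fnorm y' - s * fnorm y) := by
            intro x
            rw [← AddChar.map_add_eq_mul]
            refine congrArg ψ ?_
            show s * fnorm (x - y') - s * fnorm (x - y)
                = x 0 * (2 * s * (y 0 - y' 0)) + x 1 * (2 * s * (y 1 - y' 1))
                  + (s * fnorm y' - s * fnorm y)
            simp only [fnorm, Pi.sub_apply]
            ring
          rw [Finset.sum_congr rfl (fun x _ => split x), ← Finset.sum_mul,
            sum_linear_eq_zero hψ hmne, zero_mul]
      have hC : ∑ x : Fin 2 → F, ((Complex.normSq (h x) : ℝ) : ℂ)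
          = (EF.card : ℂ) * (Fintype.card F : ℂ)^2 := by
        have e1 : ∀ x : Fin 2 → F, ((Complex.normSq (h x) : ℝ) : ℂ)
            = ∑ y ∈ EF, ∑ y' ∈ EF, ψ (s * fnorm (x - y') - s * fnorm (x - y)) := by
          intro x
          rw [← Complex.mul_conj, mul_comm, hh, map_sum]
          rw [Finset.sum_mul_sum]
          refine Finset.sum_congr rfl fun y _ => Finset.sum_congr rfl fun y' _ => ?_
          rw [hconj, ← AddChar.map_add_eq_mul]
          exact congrArg ψ (by ring)
        rw [Finset.sum_congr rfl fun x _ => e1 x]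
        rw [Finset.sum_comm]
        rw [Finset.sum_congr rfl (fun (y : Fin 2 → F) _ =>
          (Finset.sum_comm : (∑ x : Fin 2 → F, ∑ y' ∈ EF, ψ (s * fnorm (x - y') - s * fnorm (x - y)))
            = ∑ y' ∈ EF, ∑ x : Fin 2 → F, ψ (s * fnorm (x - y') - s * fnorm (x - y))))]
        rw [Finset.sum_congr rfl (fun y hy => Finset.sum_congr rfl
          (fun y' hy' => e2 y y' hy hy'))]
        rw [Finset.sum_congr rfl
          (fun y _ => Finset.sum_ite_eq EF y (fun _ => ((Fintype.card F : ℂ))^2))]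
        rw [Finset.sum_congr rfl (fun y hy => if_pos hy), Finset.sum_const, nsmul_eq_mul]
      exact_mod_cast hC
    -- Cauchy-Schwarz and extension to the full plane
    have habs : ‖T s‖ ≤ ∑ x ∈ EF, ‖h x‖ := by
      rw [hTs]
      exact norm_sum_le EF h
    have hcs : (∑ x ∈ EF, ‖h x‖)^2
        ≤ (EF.card : ℝ) * ∑ x ∈ EF, (‖h x‖)^2 := by
      exact sq_sum_le_card_mul_sum_sq
    have hext : ∑ x ∈ EF, (‖h x‖)^2 ≤ ∑ x : Fin 2 → F, (‖h x‖)^2 :=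
      Finset.sum_le_sum_of_subset_of_nonneg (Finset.subset_univ EF)
        (fun x _ _ => sq_nonneg _)
    have hfull' : ∑ x : Fin 2 → F, (‖h x‖)^2
        = (EF.card : ℝ) * (Fintype.card F : ℝ)^2 := by
      rw [← hfull]
      exact Finset.sum_congr rfl fun x _ => Complex.sq_norm (h x)
    have h1 : Complex.normSq (T s) ≤ (∑ x ∈ EF, ‖h x‖)^2 := by
      rw [← Complex.sq_norm]
      exact pow_le_pow_left₀ (norm_nonneg _) habs 2
    have hcard0 : (0:ℝ) ≤ (EF.card : ℝ) := Nat.cast_nonneg _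
    calc Complex.normSq (T s) ≤ (∑ x ∈ EF, ‖h x‖)^2 := h1
      _ ≤ (EF.card : ℝ) * ∑ x ∈ EF, (‖h x‖)^2 := hcs
      _ ≤ (EF.card : ℝ) * ((EF.card : ℝ) * (Fintype.card F : ℝ)^2) := by
          refine mul_le_mul_of_nonneg_left ?_ hcard0
          rw [← hfull']
          exact hext
      _ = (EF.card : ℝ)^2 * (Fintype.card F : ℝ)^2 := by ring
  -- final assembly
  rw [keyR]
  have hsplit : ∑ s : F, Complex.normSq (T s)
      = Complex.normSq (T 0) + ∑ s ∈ Finset.univ.erase 0, Complex.normSq (T s) :=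
    (Finset.add_sum_erase _ _ (Finset.mem_univ 0)).symm
  rw [hsplit, hT0]
  have htail : ∑ s ∈ Finset.univ.erase 0, Complex.normSq (T s)
      ≤ (Fintype.card F : ℝ)^3 * (EF.card : ℝ)^2 := by
    have hcarderase : ((Finset.univ.erase (0:F)).card : ℝ) ≤ (Fintype.card F : ℝ) := by
      have := Finset.card_le_card (Finset.erase_subset (0:F) Finset.univ)
      rw [Finset.card_univ] at this
      exact_mod_cast this
    calc ∑ s ∈ Finset.univ.erase 0, Complex.normSq (T s)
        ≤ ∑ _s ∈ Finset.univ.erase (0:F), (EF.card : ℝ)^2 * (Fintype.card F : ℝ)^2 :=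
          Finset.sum_le_sum fun s hsm => hs_bound s (Finset.ne_of_mem_erase hsm)
      _ = ((Finset.univ.erase (0:F)).card : ℝ) * ((EF.card : ℝ)^2 * (Fintype.card F : ℝ)^2) := by
          rw [Finset.sum_const, nsmul_eq_mul]
      _ ≤ (Fintype.card F : ℝ) * ((EF.card : ℝ)^2 * (Fintype.card F : ℝ)^2) := by
          refine mul_le_mul_of_nonneg_right hcarderase (by positivity)
      _ = (Fintype.card F : ℝ)^3 * (EF.card : ℝ)^2 := by ring
  linarith

end Stmt1Aux2

open Stmt1Aux Stmt1Aux2 in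
set_option maxHeartbeats 1600000 in
theorem stmt_1 :
    ∃ C > (0 : ℝ), ∃ c > (0 : ℝ),
      ∀ (F : Type) [Field F] [Fintype F], Odd (Fintype.card F) →
        ∀ (E : Set (Fin 2 → F)) (ρ : ℝ),
          C / Real.sqrt (Fintype.card F) ≤ ρ → ρ ≤ 1 →
          ρ * (Fintype.card F : ℝ) ^ 2 ≤ (E.ncard : ℝ) →
          c * ρ * (Fintype.card F : ℝ) ^ 3 ≤
            (Set.ncard {abc : F × F × F | ∃ x ∈ E, ∃ y ∈ E, ∃ z ∈ E,
              fnorm (x - y) = abc.1 ∧ fnorm (x - z) = abc.2.1 ∧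
              fnorm (y - z) = abc.2.2} : ℝ) := by
  refine ⟨10, by norm_num, 1/8, by norm_num, ?_⟩
  intro F _ _ hodd E ρ hρ1 hρ2 hρ3
  classical
  set q : ℕ := Fintype.card F with hq
  have hqpos : 0 < q := Fintype.card_pos
  have hqR : (0:ℝ) < (q:ℝ) := by exact_mod_cast hqpos
  have hsqpos : 0 < Real.sqrt q := Real.sqrt_pos.mpr hqR
  have hρpos : 0 < ρ := lt_of_lt_of_le (by positivity) hρ1
  have hsq10 : (10:ℝ) ≤ Real.sqrt q := by
    rw [div_le_iff₀ hsqpos] at hρ1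
    nlinarith
  have hq100 : (100:ℝ) ≤ (q:ℝ) := by
    nlinarith [Real.sq_sqrt hqR.le]
  have h2F : (2:F) ≠ 0 := two_ne_zero_of_odd_card hodd
  -- the finite set E
  have hfin : E.Finite := Set.toFinite E
  set EF : Finset (Fin 2 → F) := hfin.toFinset with hEF
  have hmemEF : ∀ x, x ∈ EF ↔ x ∈ E := fun x => hfin.mem_toFinset
  have hEcard : ρ * (q:ℝ)^2 ≤ (EF.card : ℝ) := by
    rw [hEF, ← Set.ncard_eq_toFinset_card E hfin]
    exact hρ3
  have hEpos : (0:ℝ) < (EF.card:ℝ) := lt_of_lt_of_le (by positivity) hEcard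
  have hE2 : 100 * (q:ℝ)^3 ≤ (EF.card:ℝ)^2 := by
    have h10 : 10 ≤ Real.sqrt q * ρ := by
      rw [div_le_iff₀ hsqpos] at hρ1
      linarith
    have h1 : 10 * (q:ℝ)^2 ≤ Real.sqrt q * (EF.card:ℝ) := by
      calc 10 * (q:ℝ)^2 ≤ (Real.sqrt q * ρ) * (q:ℝ)^2 := by nlinarith
        _ = Real.sqrt q * (ρ * (q:ℝ)^2) := by ring
        _ ≤ Real.sqrt q * (EF.card:ℝ) := by
            exact mul_le_mul_of_nonneg_left hEcard hsqpos.le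
    have h2 : (10 * (q:ℝ)^2)^2 ≤ (Real.sqrt q * (EF.card:ℝ))^2 := by
      apply pow_le_pow_left₀ (by positivity) h1
    have h3 : (Real.sqrt q)^2 = (q:ℝ) := Real.sq_sqrt hqR.le
    nlinarith
  -- distance counting
  set P : Finset ((Fin 2 → F) × (Fin 2 → F)) := EF ×ˢ EF with hP
  have energy := energy_bound hodd EF
  set ν : F → ℕ := fun a => ((P.filter (fun p => fd p = a)).card) with hν
  have hsum : ∑ a : F, (ν a : ℝ) = (EF.card:ℝ)^2 := by
    have hc : P.card = ∑ a : F, ν a :=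
      Finset.card_eq_sum_card_fiberwise (fun p _ => Finset.mem_univ (fd p))
    have : ((P.card : ℕ):ℝ) = ∑ a : F, (ν a : ℝ) := by
      rw [hc]; push_cast; rfl
    rw [← this, hP, Finset.card_product]
    push_cast; ring
  set Δ : Finset F := Finset.univ.filter (fun a => ν a ≠ 0) with hΔ
  have hsupp : ∑ a : F, (ν a:ℝ) = ∑ a ∈ Δ, (ν a:ℝ) := by
    rw [hΔ]
    rw [Finset.sum_filter_of_ne]
    intro a _ hne
    intro h0
    apply hne
    rw [h0]
    norm_num
  have hCS : ((EF.card:ℝ))^4 ≤ (Δ.card:ℝ) * ∑ a : F, (ν a:ℝ)^2 := by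
    have c1 : (∑ a ∈ Δ, (ν a:ℝ))^2 ≤ (Δ.card:ℝ) * ∑ a ∈ Δ, (ν a:ℝ)^2 :=
      sq_sum_le_card_mul_sum_sq
    have c2 : ∑ a ∈ Δ, (ν a:ℝ)^2 ≤ ∑ a : F, (ν a:ℝ)^2 :=
      Finset.sum_le_sum_of_subset_of_nonneg (Finset.filter_subset _ _)
        (fun a _ _ => sq_nonneg _)
    calc ((EF.card:ℝ))^4 = ((EF.card:ℝ)^2)^2 := by ring
      _ = (∑ a ∈ Δ, (ν a:ℝ))^2 := by rw [← hsupp, hsum]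
      _ ≤ (Δ.card:ℝ) * ∑ a ∈ Δ, (ν a:ℝ)^2 := c1
      _ ≤ (Δ.card:ℝ) * ∑ a : F, (ν a:ℝ)^2 := by
          exact mul_le_mul_of_nonneg_left c2 (Nat.cast_nonneg _)
  -- ∑ ν² ≤ 1.01 E⁴ / q, hence Δ.card ≥ (100/101) q
  have hNbound : (q:ℝ) * ∑ a : F, (ν a:ℝ)^2 ≤ (101/100) * (EF.card:ℝ)^4 := by
    have : (q:ℝ)^3 * (EF.card:ℝ)^2 ≤ (EF.card:ℝ)^4 / 100 := by nlinarith
    calc (q:ℝ) * ∑ a : F, (ν a:ℝ)^2 ≤ (EF.card:ℝ)^4 + (q:ℝ)^3 * (EF.card:ℝ)^2 := energy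
      _ ≤ (101/100) * (EF.card:ℝ)^4 := by linarith
  have hΔq : (q:ℝ) * 100/101 ≤ (Δ.card:ℝ) := by
    have hsqnn : 0 ≤ ∑ a : F, (ν a:ℝ)^2 := Finset.sum_nonneg (fun a _ => sq_nonneg _)
    have h1 : (q:ℝ) * (EF.card:ℝ)^4 ≤ (Δ.card:ℝ) * ((101/100) * (EF.card:ℝ)^4) := by
      calc (q:ℝ) * (EF.card:ℝ)^4 ≤ (q:ℝ) * ((Δ.card:ℝ) * ∑ a : F, (ν a:ℝ)^2) :=
            mul_le_mul_of_nonneg_left hCS hqR.le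
        _ = (Δ.card:ℝ) * ((q:ℝ) * ∑ a : F, (ν a:ℝ)^2) := by ring
        _ ≤ (Δ.card:ℝ) * ((101/100) * (EF.card:ℝ)^4) :=
            mul_le_mul_of_nonneg_left hNbound (Nat.cast_nonneg _)
    have hE4 : (0:ℝ) < (EF.card:ℝ)^4 := by positivity
    nlinarith
  set A : Finset F := Δ.erase 0 with hA
  have hAq : (q:ℝ)/2 ≤ (A.card:ℝ) := by
    have hsub : Δ ⊆ insert (0:F) A := by
      intro a ha
      by_cases h0 : a = 0
      · rw [h0]; exact Finset.mem_insert_self _ _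
      · exact Finset.mem_insert_of_mem (Finset.mem_erase.mpr ⟨h0, ha⟩)
    have : Δ.card ≤ A.card + 1 :=
      le_trans (Finset.card_le_card hsub) (Finset.card_insert_le _ _)
    have hcast : (Δ.card:ℝ) ≤ (A.card:ℝ) + 1 := by exact_mod_cast this
    linarith
  -- witnesses for each nonzero distance
  have hwit : ∀ a ∈ A, ∃ p : (Fin 2 → F) × (Fin 2 → F),
      p.1 ∈ EF ∧ p.2 ∈ EF ∧ fd p = a := by
    intro a ha
    have haΔ : a ∈ Δ := Finset.mem_of_mem_erase ha
    rw [hΔ, Finset.mem_filter] at haΔ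
    have : 0 < (P.filter (fun p => fd p = a)).card := Nat.pos_of_ne_zero haΔ.2
    obtain ⟨p, hp⟩ := Finset.card_pos.mp this
    rw [Finset.mem_filter] at hp
    rw [hP, Finset.mem_product] at hp
    exact ⟨p, hp.1.1, hp.1.2, hp.2⟩
  choose wit hw1 hw2 hw3 using hwit
  -- image of (b,c) pairs for each a
  have himg : ∀ (a : F) (ha : a ∈ A), EF.card ≤ 2 *
      ((EF.image (fun z => (fnorm ((wit a ha).1 - z), fnorm ((wit a ha).2 - z)))).card) := by
    intro a ha
    apply Finset.card_le_mul_card_image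
    intro bc _
    by_contra hgt
    push_neg at hgt
    rw [Finset.two_lt_card_iff] at hgt
    obtain ⟨z1, z2, z3, hz1, hz2, hz3, h12, h13, h23⟩ := hgt
    rw [Finset.mem_filter] at hz1 hz2 hz3
    have hane : fnorm ((wit a ha).1 - (wit a ha).2) ≠ 0 := by
      have : fd (wit a ha) = a := hw3 a ha
      rw [fd] at this
      rw [this]
      exact Finset.ne_of_mem_erase ha
    have h1 := hz1.2
    have h2 := hz2.2
    have h3 := hz3.2
    rw [Prod.mk.injEq] at h1 h2 h3
    rcases fiber_two h2F hane h1.1 h1.2 h2.1 h2.2 h3.1 h3.2 with h | h | h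
    exacts [h12 h, h13 h, h23 h]
  -- build the finset of triples
  set S : {a // a ∈ A} → Finset (F × F × F) := fun a =>
    (EF.image (fun z => (fnorm ((wit a.1 a.2).1 - z), fnorm ((wit a.1 a.2).2 - z)))).image
      (fun bc => (a.1, bc.1, bc.2)) with hS
  have hSfst : ∀ (a : {a // a ∈ A}) (t : F × F × F), t ∈ S a → t.1 = a.1 := by
    intro a t ht
    rw [hS] at ht
    simp only [Finset.mem_image] at ht
    obtain ⟨bc, _, rfl⟩ := ht
    rfl
  set B : Finset (F × F × F) := A.attach.biUnion S with hB
  have hBcard : A.card * EF.card ≤ 2 * B.card := by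
    have hdisj : ∀ a ∈ A.attach, ∀ b ∈ A.attach, a ≠ b → Disjoint (S a) (S b) := by
      intro a _ b _ hab
      rw [Finset.disjoint_left]
      intro t hta htb
      apply hab
      apply Subtype.ext
      rw [← hSfst a t hta, ← hSfst b t htb]
    rw [hB, Finset.card_biUnion hdisj, Finset.mul_sum]
    have hScard : ∀ a : {a // a ∈ A}, EF.card ≤ 2 * (S a).card := by
      intro a
      rw [hS]
      simp only
      rw [Finset.card_image_of_injective _ (by
        intro bc bc' hbc
        have hb1 : bc.1 = bc'.1 := congrArg (fun t => t.2.1) hbc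
        have hb2 : bc.2 = bc'.2 := congrArg (fun t => t.2.2) hbc
        exact Prod.ext hb1 hb2)]
      exact himg a.1 a.2
    calc A.card * EF.card = ∑ _a ∈ A.attach, EF.card := by
          rw [Finset.sum_const, Finset.card_attach, smul_eq_mul]
      _ ≤ ∑ a ∈ A.attach, 2 * (S a).card := Finset.sum_le_sum (fun a _ => hScard a)
  -- B is contained in the triple set
  set Tset : Set (F × F × F) := {abc : F × F × F | ∃ x ∈ E, ∃ y ∈ E, ∃ z ∈ E,
      fnorm (x - y) = abc.1 ∧ fnorm (x - z) = abc.2.1 ∧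
      fnorm (y - z) = abc.2.2} with hTset
  have hTfin : Tset.Finite := Set.toFinite _
  have hBT : (B.card : ℝ) ≤ (Tset.ncard : ℝ) := by
    have hsub : B ⊆ hTfin.toFinset := by
      intro t ht
      rw [hB, Finset.mem_biUnion] at ht
      obtain ⟨a, _, hta⟩ := ht
      rw [hS] at hta
      simp only [Finset.mem_image] at hta
      obtain ⟨bc, hbc, rfl⟩ := hta
      obtain ⟨z, hz, rfl⟩ := hbc
      rw [Set.Finite.mem_toFinset, hTset]
      refine ⟨(wit a.1 a.2).1, (hmemEF _).mp (hw1 a.1 a.2),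
        (wit a.1 a.2).2, (hmemEF _).mp (hw2 a.1 a.2), z, (hmemEF _).mp hz, ?_, rfl, rfl⟩
      have : fd (wit a.1 a.2) = a.1 := hw3 a.1 a.2
      rw [fd] at this
      exact this
    have := Finset.card_le_card hsub
    rw [← Set.ncard_eq_toFinset_card Tset hTfin] at this
    exact_mod_cast this
  -- final numeric chain
  have hABR : (q:ℝ)/2 * (ρ * (q:ℝ)^2) ≤ (A.card:ℝ) * (EF.card:ℝ) := by
    apply mul_le_mul hAq hEcard (by positivity) (Nat.cast_nonneg _)
  have hBR : (A.card:ℝ) * (EF.card:ℝ) ≤ 2 * (B.card:ℝ) := by exact_mod_cast hBcard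
  calc (1/8 : ℝ) * ρ * (q:ℝ)^3 ≤ (1/2) * ((q:ℝ)/2 * (ρ * (q:ℝ)^2)) := by
        nlinarith [mul_pos hρpos (pow_pos hqR 3)]
    _ ≤ (1/2) * ((A.card:ℝ) * (EF.card:ℝ)) := by linarith
    _ ≤ (B.card:ℝ) := by linarith
    _ ≤ (Tset.ncard : ℝ) := hBT
end

section
/- There exists a constant C > 0 such that the following holds for every odd prime power q: let ρ satisfy C/√q ≤ ρ ≤ 1, let x ∈ F_q², let a, b ∈ F_q with a ≠ 0, b ≠ 0, and let A, B ⊆ F_q² with A contained in the circle {y : ‖x−y‖ = a}, B contained in the circle {z : ‖x−z‖ = b}, |A| > ρq and |B| > ρq. Then the number of distinct values c ∈ F_q of the form c = ‖y−z‖ with y ∈ A and z ∈ B is at least ρq/4. -/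
/-- Two circles with centers at distance of nonzero norm intersect in at most
two points (over a field of characteristic different from two). -/
lemma circle_inter_le_two {F : Type} [Field F] (h2 : (2 : F) ≠ 0)
    (x y₀ : Fin 2 → F) (a b c : F) (ha : fnorm (x - y₀) = a) (ha0 : a ≠ 0) :
    Set.ncard {z : Fin 2 → F | fnorm (x - z) = b ∧ fnorm (y₀ - z) = c} ≤ 2 := by
  set S := {z : Fin 2 → F | fnorm (x - z) = b ∧ fnorm (y₀ - z) = c} with hS
  by_contra hlt
  push_neg at hlt
  have hfin : S.Finite := Set.finite_of_ncard_ne_zero (by omega)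
  obtain ⟨z, hz, z', hz', z'', hz'', hne1, hne2, hne3⟩ :=
    (Set.two_lt_ncard hfin).mp hlt
  set u0 : F := y₀ 0 - x 0 with hu0
  set u1 : F := y₀ 1 - x 1 with hu1
  have ha2 : u0 ^ 2 + u1 ^ 2 = a := by
    simp only [fnorm, Pi.sub_apply] at ha
    linear_combination ha
  -- key pairwise fact
  have pair : ∀ w ∈ S, ∀ w' ∈ S, w ≠ w' →
      (u0 * w 1 - u1 * w 0) + (u0 * w' 1 - u1 * w' 0) = 2 * (u0 * x 1 - u1 * x 0) ∧
      (u0 * w 1 - u1 * w 0) ≠ (u0 * w' 1 - u1 * w' 0) := by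
    intro w hw w' hw' hne
    obtain ⟨h1, h2'⟩ := hw
    obtain ⟨h3, h4⟩ := hw'
    simp only [hS, fnorm, Pi.sub_apply, Set.mem_setOf_eq] at h1 h2' h3 h4
    set d0 : F := w 0 - w' 0 with hd0def
    set d1 : F := w 1 - w' 1 with hd1def
    set m : F := (u0 * w 1 - u1 * w 0) - (u0 * w' 1 - u1 * w' 0) with hmdef
    have hu2 : 2 * (u0 * d0 + u1 * d1) = 0 := by
      linear_combination h1 - h2' - h3 + h4
    have hu : u0 * d0 + u1 * d1 = 0 := (mul_eq_zero.mp hu2).resolve_left h2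
    have hs : d0 * (w 0 + w' 0 - 2 * x 0) + d1 * (w 1 + w' 1 - 2 * x 1) = 0 := by
      linear_combination h1 - h3
    have hd0 : a * d0 = -u1 * m := by
      linear_combination u0 * hu - d0 * ha2
    have hd1 : a * d1 = u0 * m := by
      linear_combination u1 * hu - d1 * ha2
    have hmne : m ≠ 0 := by
      intro hm0
      apply hne
      have e0 : d0 = 0 := by
        have : a * d0 = 0 := by rw [hd0, hm0]; ring
        exact (mul_eq_zero.mp this).resolve_left ha0
      have e1 : d1 = 0 := by
        have : a * d1 = 0 := by rw [hd1, hm0]; ring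
        exact (mul_eq_zero.mp this).resolve_left ha0
      funext i
      fin_cases i
      · exact sub_eq_zero.mp e0
      · exact sub_eq_zero.mp e1
    have hMM : m * ((u0 * w 1 - u1 * w 0) + (u0 * w' 1 - u1 * w' 0)
        - 2 * (u0 * x 1 - u1 * x 0)) = 0 := by
      linear_combination a * hs - (w 0 + w' 0 - 2 * x 0) * hd0 - (w 1 + w' 1 - 2 * x 1) * hd1
    refine ⟨?_, ?_⟩
    · have h := (mul_eq_zero.mp hMM).resolve_left hmne
      linear_combination h
    · intro h
      exact hmne (by rw [hmdef, h, sub_self])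
  have p12 := pair z hz z' hz' hne1
  have p13 := pair z hz z'' hz'' hne2
  have p23 := pair z' hz' z'' hz'' hne3
  apply p23.2
  linear_combination p12.1 - p13.1

theorem stmt_15 :
    ∃ C > (0 : ℝ),
      ∀ (F : Type) [Field F] [Fintype F], Odd (Fintype.card F) →
        ∀ (ρ : ℝ), C / Real.sqrt (Fintype.card F) ≤ ρ → ρ ≤ 1 →
          ∀ (x : Fin 2 → F) (a b : F), a ≠ 0 → b ≠ 0 →
            ∀ (A B : Set (Fin 2 → F)),
              A ⊆ {y : Fin 2 → F | fnorm (x - y) = a} →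
              B ⊆ {z : Fin 2 → F | fnorm (x - z) = b} →
              ρ * (Fintype.card F : ℝ) < (A.ncard : ℝ) →
              ρ * (Fintype.card F : ℝ) < (B.ncard : ℝ) →
              ρ * (Fintype.card F : ℝ) / 4 ≤
                (Set.ncard {c : F | ∃ y ∈ A, ∃ z ∈ B, fnorm (y - z) = c} : ℝ) := by
  classical
  refine ⟨1, one_pos, ?_⟩
  intro F _ _ hodd ρ hρ1 hρ2 x a b ha0 hb0 A B hA hB hAcard hBcard
  have hq0 : (0 : ℝ) < (Fintype.card F : ℝ) := by exact_mod_cast Fintype.card_pos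
  -- characteristic is not two
  have h2 : (2 : F) ≠ 0 := by
    intro h
    have hchar : ringChar F ∣ 2 := by
      rw [← ringChar.spec F 2]
      exact_mod_cast h
    rcases (Nat.dvd_prime Nat.prime_two).mp hchar with h1 | h1
    · exact CharP.ringChar_ne_one h1
    · have := FiniteField.even_card_of_char_two h1
      rw [Nat.odd_iff] at hodd
      omega
  -- ρ is positive
  have hρpos : (0 : ℝ) < ρ := by
    have hsq : (0 : ℝ) < Real.sqrt (Fintype.card F) := Real.sqrt_pos.mpr hq0
    have : (0 : ℝ) < 1 / Real.sqrt (Fintype.card F) := by positivity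
    linarith
  have hρq : (0 : ℝ) < ρ * (Fintype.card F : ℝ) := mul_pos hρpos hq0
  -- pick a point of A
  have hAne : A.Nonempty := Set.nonempty_of_ncard_ne_zero (by
    intro h
    rw [h] at hAcard
    simp only [Nat.cast_zero] at hAcard
    linarith)
  obtain ⟨y₀, hy₀⟩ := hAne
  have hay : fnorm (x - y₀) = a := hA hy₀
  set T := {c : F | ∃ y ∈ A, ∃ z ∈ B, fnorm (y - z) = c} with hT
  have hBfin : B.Finite := Set.toFinite B
  set f : (Fin 2 → F) → F := fun z => fnorm (y₀ - z) with hf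
  set Bf := hBfin.toFinset with hBf
  have hcount : Bf.card ≤ 2 * (Bf.image f).card := by
    apply Finset.card_le_mul_card_image
    intro c _
    have hsub : ↑(Bf.filter (fun z => f z = c)) ⊆
        {z : Fin 2 → F | fnorm (x - z) = b ∧ fnorm (y₀ - z) = c} := by
      intro z hz
      simp only [Finset.coe_filter, Set.mem_setOf_eq, hBf, Set.Finite.mem_toFinset] at hz
      exact ⟨hB hz.1, hz.2⟩
    calc (Bf.filter (fun z => f z = c)).card
        = (↑(Bf.filter (fun z => f z = c)) : Set (Fin 2 → F)).ncard :=
          (Set.ncard_coe_finset _).symm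
      _ ≤ Set.ncard {z : Fin 2 → F | fnorm (x - z) = b ∧ fnorm (y₀ - z) = c} :=
          Set.ncard_le_ncard hsub (Set.toFinite _)
      _ ≤ 2 := circle_inter_le_two h2 x y₀ a b c hay ha0
  have himg : (Bf.image f).card ≤ T.ncard := by
    have hsub : ↑(Bf.image f) ⊆ T := by
      intro c hc
      simp only [Finset.coe_image, Set.mem_image, hBf, Set.Finite.coe_toFinset] at hc
      obtain ⟨z, hzB, hzc⟩ := hc
      exact ⟨y₀, hy₀, z, hzB, hzc⟩
    calc (Bf.image f).card = (↑(Bf.image f) : Set F).ncard := (Set.ncard_coe_finset _).symm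
      _ ≤ T.ncard := Set.ncard_le_ncard hsub (Set.toFinite _)
  have hBB : B.ncard = Bf.card := Set.ncard_eq_toFinset_card B hBfin
  have hfinal : (B.ncard : ℝ) ≤ 2 * (T.ncard : ℝ) := by
    rw [hBB]
    exact_mod_cast le_trans hcount (by omega : 2 * (Bf.image f).card ≤ 2 * T.ncard)
  linarith
end
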